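/- Let the friendship graph of an FA game consist of a bidirectional clique K ⊆ N with |K| ≥ 2 and no other friendship relations (F_j = K \ {j} for j ∈ K and F_j = ∅ for j ∉ K). Then the partition consisting of the coalition K together with every other agent as a singleton coalition is the unique optimal partition. -/

import Mathlib

open Finset

/-- FA utility of agent `i` with friend set `t` for a coalition `C` containing her:
`u_i(C) = |C ∩ F_i| − |C ∩ E_i| / n`, where `E_i = N \ (F_i ∪ {i})`. -/
def faUtil (n : ℕ) (t : Finset (Fin n)) (i : Fin n) (C : Finset (Fin n)) : ℚ :=
  ((C ∩ t).card : ℚ) - ((C \ (t ∪ {i})).card : ℚ) / (n : ℚ)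

/-- Social welfare of a partition of the agents (`SW(π) = Σ_i u_i(π(i))`). -/
def faSW (n : ℕ) (F : Fin n → Finset (Fin n))
    (π : Finpartition (univ : Finset (Fin n))) : ℚ :=
  ∑ C ∈ π.parts, ∑ i ∈ C, faUtil n (F i) i C

section FAHelpers
variable {n : ℕ}

/-- penalty of a coalition, in ℕ -/
def penN {n : ℕ} (K C : Finset (Fin n)) : ℕ :=
  2 * (C ∩ K).card * (C \ K).card + (C \ K).card * ((C \ K).card - 1)

lemma sum_util_eq {n : ℕ} (F : Fin n → Finset (Fin n)) (K : Finset (Fin n))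
    (hFK : ∀ j ∈ K, F j = K.erase j)
    (hFout : ∀ j : Fin n, j ∉ K → F j = ∅) (C : Finset (Fin n)) :
    ∑ i ∈ C, faUtil n (F i) i C =
      ((C ∩ K).card : ℚ) * (((C ∩ K).card : ℚ) - 1) - (penN K C : ℚ) / n := by
  classical
  set a := (C ∩ K).card with ha
  set b := (C \ K).card with hb
  have hcard : a + b = C.card := Finset.card_inter_add_card_sdiff C K
  have hsplit : ∑ i ∈ C, faUtil n (F i) i C
      = ∑ i ∈ C ∩ K, faUtil n (F i) i C + ∑ i ∈ C \ K, faUtil n (F i) i C :=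
    (Finset.sum_inter_add_sum_sdiff C K _).symm
  have h1 : ∀ i ∈ C ∩ K, faUtil n (F i) i C = ((a : ℚ) - 1) - (b : ℚ) / n := by
    intro i hi
    have hiC : i ∈ C := (Finset.mem_inter.1 hi).1
    have hiK : i ∈ K := (Finset.mem_inter.1 hi).2
    have hFi : F i = K.erase i := hFK i hiK
    have hu : K.erase i ∪ {i} = K := by
      ext x
      simp only [Finset.mem_union, Finset.mem_erase, Finset.mem_singleton]
      constructor
      · rintro (⟨_, h⟩ | rfl) <;> [exact h; exact hiK]
      · intro h
        by_cases hx : x = i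
        · exact Or.inr hx
        · exact Or.inl ⟨hx, h⟩
    have hinter : C ∩ K.erase i = (C ∩ K).erase i := by
      ext x; simp [Finset.mem_erase, and_comm, and_assoc, and_left_comm]
    have hcard1 : (C ∩ K.erase i).card = a - 1 := by
      rw [hinter, Finset.card_erase_of_mem hi, ha]
    have h1a : 1 ≤ a := Finset.card_pos.2 ⟨i, hi⟩
    rw [faUtil, hFi, hu, hcard1, Nat.cast_sub h1a, Nat.cast_one]
  have h2 : ∀ i ∈ C \ K, faUtil n (F i) i C = -(((a : ℚ) + b - 1) / n) := by
    intro i hi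
    have hiC : i ∈ C := (Finset.mem_sdiff.1 hi).1
    have hFi : F i = ∅ := hFout i (Finset.mem_sdiff.1 hi).2
    have hu : (∅ : Finset (Fin n)) ∪ {i} = {i} := by simp
    have hcd : (C \ {i}).card = C.card - 1 := by
      rw [Finset.sdiff_singleton_eq_erase, Finset.card_erase_of_mem hiC]
    have h1c : 1 ≤ C.card := Finset.card_pos.2 ⟨i, hiC⟩
    rw [faUtil, hFi, hu, hcd]
    simp only [Finset.inter_empty, Finset.card_empty, Nat.cast_zero]
    rw [Nat.cast_sub h1c, Nat.cast_one, ← hcard]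
    push_cast
    ring
  rw [hsplit, Finset.sum_congr rfl h1, Finset.sum_congr rfl h2,
    Finset.sum_const, Finset.sum_const, ← ha, ← hb]
  rcases Nat.eq_zero_or_pos b with hb0 | hb1
  · simp only [penN, ← ha, ← hb, hb0, Nat.cast_zero, Nat.mul_zero, Nat.zero_mul,
      Nat.add_zero, Nat.cast_ofNat, mul_zero, zero_mul, smul_eq_mul, zero_div, sub_zero]
    ring
  · have hpen : (penN K C : ℚ) = 2 * a * b + b * (b - 1) := by
      rw [penN, ← ha, ← hb]
      push_cast [Nat.cast_sub hb1]
      ring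
    rw [hpen]
    have hn : 0 < n := by
      obtain ⟨i, hi⟩ := Finset.card_pos.1 hb1
      exact i.pos
    have hn' : (n : ℚ) ≠ 0 := Nat.cast_ne_zero.2 hn.ne'
    field_simp
    have hnn : (n : ℚ) * (n : ℚ)⁻¹ = 1 := mul_inv_cancel₀ hn'
    linear_combination (-2 * (a : ℚ) * b + b - (b : ℚ) ^ 2 + n * ((a : ℚ) ^ 2 - a)) * hnn

lemma sum_inter_parts (K : Finset (Fin n)) (σ : Finpartition (univ : Finset (Fin n))) :
    ∑ C ∈ σ.parts, (C ∩ K).card = K.card := by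
  classical
  have hdisj : ∀ C ∈ σ.parts, ∀ D ∈ σ.parts, C ≠ D → Disjoint (C ∩ K) (D ∩ K) := by
    intro C hC D hD hne
    exact Finset.disjoint_of_subset_left Finset.inter_subset_left
      (Finset.disjoint_of_subset_right Finset.inter_subset_left (σ.disjoint hC hD hne))
  have hun : σ.parts.biUnion (fun C => C ∩ K) = K := by
    ext x
    simp only [Finset.mem_biUnion, Finset.mem_inter]
    constructor
    · rintro ⟨C, _, _, hx⟩; exact hx
    · intro hx
      obtain ⟨C, hC, hxC⟩ := σ.exists_mem (Finset.mem_univ x)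
      exact ⟨C, hC, hxC, hx⟩
  calc ∑ C ∈ σ.parts, (C ∩ K).card
      = (σ.parts.biUnion (fun C => C ∩ K)).card := (Finset.card_biUnion hdisj).symm
    _ = K.card := by rw [hun]

section
variable (F : Fin n → Finset (Fin n)) (K : Finset (Fin n))

lemma faSW_eq (hFK : ∀ j ∈ K, F j = K.erase j) (hFout : ∀ j : Fin n, j ∉ K → F j = ∅)
    (σ : Finpartition (univ : Finset (Fin n))) :
    faSW n F σ = ∑ C ∈ σ.parts,
      (((C ∩ K).card : ℚ) * (((C ∩ K).card : ℚ) - 1) - (penN K C : ℚ) / n) :=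
  Finset.sum_congr rfl fun C _ => sum_util_eq F K hFK hFout C

lemma term_le (hn : 0 < n) (C : Finset (Fin n)) (hCK : (C ∩ K).card ≤ K.card) :
    ((C ∩ K).card : ℚ) * (((C ∩ K).card : ℚ) - 1) - (penN K C : ℚ) / n
      ≤ ((C ∩ K).card : ℚ) * ((K.card : ℚ) - 1) := by
  have h1 : (0 : ℚ) ≤ (penN K C : ℚ) / n := by positivity
  have h2 : ((C ∩ K).card : ℚ) * (((C ∩ K).card : ℚ) - 1)
      ≤ ((C ∩ K).card : ℚ) * ((K.card : ℚ) - 1) := by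
    apply mul_le_mul_of_nonneg_left _ (by positivity)
    have : ((C ∩ K).card : ℚ) ≤ (K.card : ℚ) := Nat.cast_le.2 hCK
    linarith
  linarith

lemma faSW_le (hn : 0 < n) (hFK : ∀ j ∈ K, F j = K.erase j)
    (hFout : ∀ j : Fin n, j ∉ K → F j = ∅) (σ : Finpartition (univ : Finset (Fin n))) :
    faSW n F σ ≤ (K.card : ℚ) * ((K.card : ℚ) - 1) := by
  rw [faSW_eq F K hFK hFout]
  calc ∑ C ∈ σ.parts, (((C ∩ K).card : ℚ) * (((C ∩ K).card : ℚ) - 1) - (penN K C : ℚ) / n)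
      ≤ ∑ C ∈ σ.parts, ((C ∩ K).card : ℚ) * ((K.card : ℚ) - 1) := by
        apply Finset.sum_le_sum
        intro C _
        exact term_le K hn C (Finset.card_le_card Finset.inter_subset_right)
    _ = (K.card : ℚ) * ((K.card : ℚ) - 1) := by
        rw [← Finset.sum_mul, ← Nat.cast_sum, sum_inter_parts K σ]

lemma K_not_mem_image (hK : 2 ≤ K.card) :
    K ∉ ((univ : Finset (Fin n)) \ K).image fun j => ({j} : Finset (Fin n)) := by
  intro h
  obtain ⟨j, _, hj⟩ := Finset.mem_image.1 h
  rw [← hj] at hK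
  simp at hK

/-- the target partition -/
def targetPart (hK : 2 ≤ K.card) : Finpartition (univ : Finset (Fin n)) where
  parts := insert K (((univ : Finset (Fin n)) \ K).image fun j => ({j} : Finset (Fin n)))
  supIndep := by
    rw [Finset.supIndep_iff_pairwiseDisjoint]
    intro C hC D hD hne
    simp only [Finset.coe_insert, Set.mem_insert_iff, Finset.coe_image, Set.mem_image,
      Finset.mem_coe, Finset.mem_sdiff, Finset.mem_univ, true_and] at hC hD
    rcases hC with rfl | ⟨j, hj, rfl⟩ <;> rcases hD with rfl | ⟨l, hl, rfl⟩
    · exact absurd rfl hne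
    · exact Finset.disjoint_singleton_right.2 hl
    · exact Finset.disjoint_singleton_left.2 hj
    · refine Finset.disjoint_singleton_left.2 ?_
      intro h
      exact hne (by rw [Finset.mem_singleton.1 h])
  sup_parts := by
    apply Finset.Subset.antisymm
    · intro x _; exact Finset.mem_univ x
    · intro x _
      rw [Finset.mem_sup]
      by_cases hx : x ∈ K
      · exact ⟨K, Finset.mem_insert_self _ _, hx⟩
      · refine ⟨{x}, Finset.mem_insert_of_mem ?_, Finset.mem_singleton_self x⟩
        exact Finset.mem_image.2 ⟨x, Finset.mem_sdiff.2 ⟨Finset.mem_univ x, hx⟩, rfl⟩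
  bot_notMem := by
    simp only [Finset.bot_eq_empty, Finset.mem_insert, Finset.mem_image]
    rintro (h | ⟨j, _, hj⟩)
    · rw [← h] at hK; simp at hK
    · exact Finset.singleton_ne_empty j hj

lemma faSW_target (hK : 2 ≤ K.card) (hFK : ∀ j ∈ K, F j = K.erase j)
    (hFout : ∀ j : Fin n, j ∉ K → F j = ∅)
    (σ : Finpartition (univ : Finset (Fin n)))
    (hp : σ.parts = insert K (((univ : Finset (Fin n)) \ K).image
      fun j => ({j} : Finset (Fin n)))) :
    faSW n F σ = (K.card : ℚ) * ((K.card : ℚ) - 1) := by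
  rw [faSW, Finset.sum_congr rfl fun C _ => sum_util_eq F K hFK hFout C, hp,
    Finset.sum_insert (K_not_mem_image K hK)]
  have hKval : ((K ∩ K).card : ℚ) * (((K ∩ K).card : ℚ) - 1) - (penN K K : ℚ) / n
      = (K.card : ℚ) * ((K.card : ℚ) - 1) := by
    simp [penN]
  rw [hKval]
  have : ∀ C ∈ ((univ : Finset (Fin n)) \ K).image fun j => ({j} : Finset (Fin n)),
      ((C ∩ K).card : ℚ) * (((C ∩ K).card : ℚ) - 1) - (penN K C : ℚ) / n = 0 := by
    intro C hC
    obtain ⟨j, hj, rfl⟩ := Finset.mem_image.1 hC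
    have hjK : j ∉ K := (Finset.mem_sdiff.1 hj).2
    have h1 : ({j} : Finset (Fin n)) ∩ K = ∅ := by
      rw [Finset.singleton_inter_of_notMem hjK]
    have h2 : ({j} : Finset (Fin n)) \ K = {j} := by
      rw [Finset.sdiff_eq_self_of_disjoint (Finset.disjoint_singleton_left.2 hjK)]
    simp [penN, h1, h2]
  rw [Finset.sum_congr rfl this, Finset.sum_const_zero, add_zero]

lemma parts_of_eq (hn : 0 < n) (hK : 2 ≤ K.card)
    (hFK : ∀ j ∈ K, F j = K.erase j) (hFout : ∀ j : Fin n, j ∉ K → F j = ∅)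
    (σ : Finpartition (univ : Finset (Fin n)))
    (heq : faSW n F σ = (K.card : ℚ) * ((K.card : ℚ) - 1)) :
    σ.parts = insert K (((univ : Finset (Fin n)) \ K).image
      fun j => ({j} : Finset (Fin n))) := by
  classical
  set g : Finset (Fin n) → ℚ := fun C =>
    ((C ∩ K).card : ℚ) * ((K.card : ℚ) - 1)
      - (((C ∩ K).card : ℚ) * (((C ∩ K).card : ℚ) - 1) - (penN K C : ℚ) / n) with hg
  have hg0 : ∀ C ∈ σ.parts, 0 ≤ g C := by
    intro C _
    have := term_le K hn C (Finset.card_le_card Finset.inter_subset_right)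
    simp only [hg]; linarith
  have hsum : ∑ C ∈ σ.parts, g C = 0 := by
    have h1 : ∑ C ∈ σ.parts, ((C ∩ K).card : ℚ) * ((K.card : ℚ) - 1)
        = (K.card : ℚ) * ((K.card : ℚ) - 1) := by
      rw [← Finset.sum_mul, ← Nat.cast_sum, sum_inter_parts K σ]
    rw [hg, Finset.sum_sub_distrib, h1, ← faSW_eq F K hFK hFout σ, heq, sub_self]
  have hzero : ∀ C ∈ σ.parts, g C = 0 :=
    (Finset.sum_eq_zero_iff_of_nonneg hg0).1 hsum
  -- per-part conclusions
  have key : ∀ C ∈ σ.parts,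
      ((C ∩ K).card = 0 ∨ (C ∩ K).card = K.card) ∧ penN K C = 0 := by
    intro C hC
    have h0 := hzero C hC
    set a : ℚ := ((C ∩ K).card : ℚ) with hadef
    have ha0 : 0 ≤ a := by positivity
    have hak : a ≤ (K.card : ℚ) :=
      Nat.cast_le.2 (Finset.card_le_card Finset.inter_subset_right)
    have hp0 : (0 : ℚ) ≤ (penN K C : ℚ) / n := by positivity
    have hfirst : 0 ≤ a * ((K.card : ℚ) - 1) - a * (a - 1) := by nlinarith
    have hg' : a * ((K.card : ℚ) - 1) - a * (a - 1) + (penN K C : ℚ) / n = 0 := by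
      simp only [hg] at h0; linarith
    have hpen : (penN K C : ℚ) = 0 := by
      have hdiv : (penN K C : ℚ) / n = 0 := by linarith
      rcases div_eq_zero_iff.1 hdiv with h | h
      · exact h
      · exact absurd h (Nat.cast_ne_zero.2 hn.ne')
    have hpenN : penN K C = 0 := by exact_mod_cast hpen
    have haeq : a * ((K.card : ℚ) - a) = 0 := by
      have : a * ((K.card : ℚ) - 1) - a * (a - 1) = 0 := by
        rw [hpen, zero_div] at hg'; linarith
      nlinarith [this]
    rcases mul_eq_zero.1 haeq with h | h
    · rw [hadef] at h
      exact ⟨Or.inl (by exact_mod_cast h), hpenN⟩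
    · refine ⟨Or.inr ?_, hpenN⟩
      have h2 : a = (K.card : ℚ) := by linarith
      rw [hadef] at h2
      exact_mod_cast h2
  -- K is a part
  have hKne : K.Nonempty := Finset.card_pos.1 (by omega)
  obtain ⟨i₀, hi₀⟩ := hKne
  obtain ⟨C₀, hC₀, hi₀C⟩ := σ.exists_mem (Finset.mem_univ i₀)
  have hKmem : K ∈ σ.parts := by
    have ha1 : 1 ≤ (C₀ ∩ K).card :=
      Finset.card_pos.2 ⟨i₀, Finset.mem_inter.2 ⟨hi₀C, hi₀⟩⟩
    obtain ⟨hak, hpen⟩ := key C₀ hC₀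
    have hak' : (C₀ ∩ K).card = K.card := by
      rcases hak with h | h
      · omega
      · exact h
    have hCK' : C₀ ∩ K = K :=
      Finset.eq_of_subset_of_card_le Finset.inter_subset_right (le_of_eq hak'.symm)
    have hsub : K ⊆ C₀ := by
      rw [← hCK']; exact Finset.inter_subset_left
    have hb0 : (C₀ \ K).card = 0 := by
      rw [penN, hak'] at hpen
      have h1 : 2 * K.card * (C₀ \ K).card = 0 := Nat.eq_zero_of_add_eq_zero_right hpen
      rcases Nat.mul_eq_zero.1 h1 with h | h
      · omega
      · exact h
    have : C₀ ⊆ K := by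
      rw [← Finset.sdiff_eq_empty_iff_subset]
      exact Finset.card_eq_zero.1 hb0
    have : C₀ = K := Finset.Subset.antisymm this hsub
    exact this ▸ hC₀
  -- characterization of all parts
  have hchar : ∀ C ∈ σ.parts, C = K ∨ ∃ j, j ∉ K ∧ C = {j} := by
    intro C hC
    by_cases hCK : C = K
    · exact Or.inl hCK
    · right
      have hdisj : Disjoint C K := σ.disjoint hC hKmem hCK
      have hCKe : C ∩ K = ∅ := Finset.disjoint_iff_inter_eq_empty.1 hdisj
      have hCd : C \ K = C := Finset.sdiff_eq_self_of_disjoint hdisj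
      obtain ⟨_, hpen⟩ := key C hC
      rw [penN, hCKe, hCd] at hpen
      simp only [Finset.card_empty, Nat.mul_zero, Nat.zero_mul, mul_zero] at hpen
      have hb1 : C.card ≤ 1 := by
        rw [Nat.zero_add] at hpen
        rcases Nat.mul_eq_zero.1 hpen with h | h <;> omega
      have hbne : 1 ≤ C.card := Finset.card_pos.2 (σ.nonempty_of_mem_parts hC)
      obtain ⟨j, hj⟩ := Finset.card_eq_one.1 (le_antisymm hb1 hbne)
      refine ⟨j, ?_, hj⟩
      intro hjK
      have : j ∈ C ∩ K := Finset.mem_inter.2 ⟨hj ▸ Finset.mem_singleton_self j, hjK⟩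
      rw [hCKe] at this
      exact absurd this (Finset.notMem_empty j)
  -- set equality
  ext C
  simp only [Finset.mem_insert, Finset.mem_image, Finset.mem_sdiff, Finset.mem_univ, true_and]
  constructor
  · intro hC
    rcases hchar C hC with h | ⟨j, hjK, rfl⟩
    · exact Or.inl h
    · exact Or.inr ⟨j, hjK, rfl⟩
  · rintro (rfl | ⟨j, hjK, rfl⟩)
    · exact hKmem
    · obtain ⟨D, hD, hjD⟩ := σ.exists_mem (Finset.mem_univ j)
      rcases hchar D hD with rfl | ⟨l, hlK, rfl⟩
      · exact absurd hjD hjK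
      · have : j = l := Finset.mem_singleton.1 hjD
        subst this
        exact hD

end
end FAHelpers

/-- If the friendship graph consists of a bidirectional clique `K` with `|K| ≥ 2` and
no other friendship relations, then a partition is optimal iff its coalitions are
exactly `K` together with all other agents as singletons (unique optimal partition). -/
theorem stmt5 (n : ℕ) (hn : 0 < n) (F : Fin n → Finset (Fin n))
    (K : Finset (Fin n)) (hK : 2 ≤ K.card)
    (hFK : ∀ j ∈ K, F j = K.erase j)
    (hFout : ∀ j : Fin n, j ∉ K → F j = ∅) :
    ∀ π : Finpartition (univ : Finset (Fin n)),
      (∀ σ : Finpartition (univ : Finset (Fin n)), faSW n F σ ≤ faSW n F π) ↔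
        π.parts = insert K
          (((univ : Finset (Fin n)) \ K).image fun j => ({j} : Finset (Fin n))) := by
  intro π
  constructor
  · intro hopt
    have h1 : faSW n F π ≤ (K.card : ℚ) * ((K.card : ℚ) - 1) :=
      faSW_le F K hn hFK hFout π
    have h3 : faSW n F (targetPart K hK) = (K.card : ℚ) * ((K.card : ℚ) - 1) :=
      faSW_target F K hK hFK hFout (targetPart K hK) rfl
    have h2 : (K.card : ℚ) * ((K.card : ℚ) - 1) ≤ faSW n F π :=
      h3 ▸ hopt (targetPart K hK)
    exact parts_of_eq F K hn hK hFK hFout π (le_antisymm h1 h2)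
  · intro hp σ
    rw [faSW_target F K hK hFK hFout π hp]
    exact faSW_le F K hn hFK hFout σ
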